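/- Let V be a finite-dimensional real inner product space with basis (e_i)_{i∈I} indexed by a finite set I, and let (f_i)_{i∈I} be the dual basis characterized by (e_i, f_j) = δ_{ij}. Let σ be a permutation of I such that the linear map determined by e_i ↦ e_{σ(i)} is an isometry of V (then it also maps f_i to f_{σ(i)}). For i ∈ I let n_i denote the cardinality of the σ-orbit of i. Then the set {x ∈ V : x is fixed by the isometry and (x, β) ∈ ℤ for every β = ∑_i β_i f_i with all β_i ∈ ℤ and β_{σ(i)} = β_i} equals the set {∑_i λ_i e_i : λ_{σ(i)} = λ_i for all i, and n_i λ_i ∈ ℤ for all i}. -/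

import Mathlib

open scoped RealInnerProductSpace
open Complex

section AuxLemmas

variable {ι : Type*} [Fintype ι]

lemma my_perm_orbit_symm (σ : Equiv.Perm ι) {a b : ι} (h : ∃ k : ℕ, (σ ^ k) a = b) :
    ∃ k : ℕ, (σ ^ k) b = a := by
  obtain ⟨k, hk⟩ := h
  refine ⟨orderOf σ * k - k, ?_⟩
  have hpos : 0 < orderOf σ := orderOf_pos σ
  have h1 : orderOf σ * k - k + k = orderOf σ * k := by
    nlinarith [Nat.sub_add_cancel (Nat.le_mul_of_pos_left k hpos)]
  have h2 : σ ^ (orderOf σ * k) = 1 := by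
    rw [pow_mul, pow_orderOf_eq_one, one_pow]
  calc (σ ^ (orderOf σ * k - k)) b = (σ ^ (orderOf σ * k - k)) ((σ ^ k) a) := by rw [hk]
    _ = (σ ^ (orderOf σ * k - k) * σ ^ k) a := rfl
    _ = (σ ^ (orderOf σ * k)) a := by rw [← pow_add, h1]
    _ = a := by rw [h2]; rfl

omit [Fintype ι] in
lemma my_invariant_pow {α : Type*} (σ : Equiv.Perm ι) (g : ι → α)
    (hg : ∀ i, g (σ i) = g i) (k : ℕ) (a : ι) : g ((σ ^ k) a) = g a := by
  induction k with
  | zero => rfl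
  | succ n ih => rw [pow_succ', Equiv.Perm.mul_apply, hg, ih]

lemma my_orbit_succ (σ : Equiv.Perm ι) (i j : ι) :
    (∃ k : ℕ, (σ ^ k) i = σ j) ↔ ∃ k : ℕ, (σ ^ k) i = j := by
  constructor
  · intro h
    obtain ⟨k', hk'⟩ := my_perm_orbit_symm σ h
    apply my_perm_orbit_symm σ
    exact ⟨k' + 1, by rw [pow_succ, Equiv.Perm.mul_apply, hk']⟩
  · rintro ⟨k, hk⟩
    exact ⟨k + 1, by rw [pow_succ', Equiv.Perm.mul_apply, hk]⟩

lemma my_sum_invariant_int (σ : Equiv.Perm ι) (β : ι → ℤ) (lam : ι → ℝ)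
    (hβ : ∀ i, β (σ i) = β i) (hlam : ∀ i, lam (σ i) = lam i)
    (hm : ∀ i, ∃ m : ℤ, (Nat.card {j : ι | ∃ k : ℕ, (σ ^ k) i = j} : ℝ) * lam i = (m : ℝ)) :
    ∃ n : ℤ, ∑ j, (β j : ℝ) * lam j = (n : ℝ) := by
  classical
  let s : Setoid ι := ⟨fun a b => ∃ k : ℕ, (σ ^ k) a = b,
    ⟨fun a => ⟨0, rfl⟩, fun h => my_perm_orbit_symm σ h,
     fun h h' => by
       obtain ⟨k, hk⟩ := h; obtain ⟨l, hl⟩ := h'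
       exact ⟨l + k, by rw [pow_add, Equiv.Perm.mul_apply, hk, hl]⟩⟩⟩
  have hrel : ∀ a b : ι, (Quotient.mk s a = Quotient.mk s b) ↔ ∃ k : ℕ, (σ ^ k) a = b :=
    fun a b => Quotient.eq (r := s)
  have hcard : ∀ c : Quotient s,
      ((Finset.univ.filter fun j => Quotient.mk s j = c).card : ℝ)
        = (Nat.card {j : ι | ∃ k : ℕ, (σ ^ k) c.out = j} : ℝ) := by
    intro c
    congr 1
    rw [Nat.card_eq_fintype_card, Fintype.card_subtype]
    congr 1
    apply Finset.filter_congr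
    intro j _
    constructor
    · intro h
      exact my_perm_orbit_symm σ ((hrel j c.out).1 (h.trans (Quotient.out_eq c).symm))
    · intro h
      exact ((hrel j c.out).2 (my_perm_orbit_symm σ h)).trans (Quotient.out_eq c)
  have key : ∀ c : Quotient s,
      ∑ j ∈ Finset.univ.filter (fun j => Quotient.mk s j = c), (β j : ℝ) * lam j
        = (β c.out : ℝ) * ((Nat.card {j : ι | ∃ k : ℕ, (σ ^ k) c.out = j} : ℝ) * lam c.out) := by
    intro c
    have houtc : Quotient.mk s c.out = c := Quotient.out_eq c
    have hconst : ∀ j ∈ Finset.univ.filter (fun j => Quotient.mk s j = c),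
        (β j : ℝ) * lam j = (β c.out : ℝ) * lam c.out := by
      intro j hj
      rw [Finset.mem_filter] at hj
      obtain ⟨k, hk⟩ := (hrel j c.out).1 (hj.2.trans houtc.symm)
      rw [← hk, my_invariant_pow σ β hβ, my_invariant_pow σ lam hlam]
    rw [Finset.sum_congr rfl hconst, Finset.sum_const, nsmul_eq_mul, hcard c]
    ring
  obtain ⟨m, hmspec⟩ : ∃ m : Quotient s → ℤ, ∀ c,
      (Nat.card {j : ι | ∃ k : ℕ, (σ ^ k) c.out = j} : ℝ) * lam c.out = (m c : ℝ) := by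
    choose m hm' using fun c : Quotient s => hm c.out
    exact ⟨m, hm'⟩
  refine ⟨∑ c : Quotient s, β c.out * m c, ?_⟩
  rw [← Finset.sum_fiberwise Finset.univ (Quotient.mk s) (fun j => (β j : ℝ) * lam j)]
  push_cast
  refine Finset.sum_congr rfl fun c _ => ?_
  rw [key c, hmspec c]

end AuxLemmas

/-- Let `V` be a finite-dimensional real inner product space with basis `(e i)` and dual
basis `(f i)` characterised by `(e i, f j) = δᵢⱼ`.  Let `σ` be a permutation of the index
set such that `e i ↦ e (σ i)` extends to a linear isometry `ω` of `V`.  Then `ω` also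
maps `f i` to `f (σ i)`, and the set of `ω`-fixed vectors `x` with `(x, β) ∈ ℤ` for every
symmetric integral coroot `β = ∑ βᵢ f i` (with `βᵢ ∈ ℤ`, `β_{σ i} = βᵢ`) equals the
fractional symmetric weight lattice
`{∑ λᵢ e i | λ_{σ i} = λᵢ and nᵢ λᵢ ∈ ℤ}`, where `nᵢ` is the length of the `σ`-orbit of
`i`. -/
theorem fractional_symmetric_weight_lattice_eq
    {V : Type*} [NormedAddCommGroup V] [InnerProductSpace ℝ V] [FiniteDimensional ℝ V]
    {ι : Type*} [Fintype ι] [DecidableEq ι]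
    (e : Module.Basis ι ℝ V) (f : ι → V)
    (hdual : ∀ i j, ⟪e i, f j⟫ = if i = j then (1 : ℝ) else 0)
    (σ : Equiv.Perm ι) (ω : V ≃ₗᵢ[ℝ] V) (hω : ∀ i, ω (e i) = e (σ i)) :
    (∀ i, ω (f i) = f (σ i)) ∧
    {x : V | ω x = x ∧ ∀ β : ι → ℤ, (∀ i, β (σ i) = β i) →
        ∃ n : ℤ, ⟪x, ∑ i, (β i : ℝ) • f i⟫ = (n : ℝ)} =
      {x : V | ∃ lam : ι → ℝ, (∀ i, lam (σ i) = lam i) ∧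
        (∀ i, ∃ m : ℤ, (Nat.card {j : ι | ∃ k : ℕ, (σ ^ k) i = j} : ℝ) * lam i = (m : ℝ)) ∧
        x = ∑ i, lam i • e i} := by
  classical
  have hcoord : ∀ (lam : ι → ℝ) (j : ι), ⟪∑ i, lam i • e i, f j⟫ = lam j := by
    intro lam j
    rw [sum_inner]
    simp [real_inner_smul_left, hdual]
  have hωf : ∀ i, ω (f i) = f (σ i) := by
    intro i
    refine InnerProductSpace.ext_inner_left_basis e fun j => ?_
    have h1 : ω (e (σ⁻¹ j)) = e j := by rw [hω]; simp
    calc ⟪e j, ω (f i)⟫ = ⟪ω (e (σ⁻¹ j)), ω (f i)⟫ := by rw [h1]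
      _ = ⟪e (σ⁻¹ j), f i⟫ := ω.inner_map_map _ _
      _ = if σ⁻¹ j = i then 1 else 0 := hdual _ _
      _ = if j = σ i then 1 else 0 := by simp only [Equiv.Perm.inv_eq_iff_eq]
      _ = ⟪e j, f (σ i)⟫ := (hdual _ _).symm
  refine ⟨hωf, ?_⟩
  ext x
  simp only [Set.mem_setOf_eq]
  constructor
  · rintro ⟨hfix, hint⟩
    set lam : ι → ℝ := fun i => e.repr x i with hlamdef
    have hx : x = ∑ i, lam i • e i := (e.sum_repr x).symm
    have hinner : ∀ j, ⟪x, f j⟫ = lam j := by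
      intro j
      conv_lhs => rw [hx]
      exact hcoord lam j
    have hsym : ∀ i, lam (σ i) = lam i := by
      intro i
      have h : ⟪x, f (σ i)⟫ = ⟪x, f i⟫ := by
        conv_lhs => rw [← hfix]
        rw [← hωf i]
        exact ω.inner_map_map x (f i)
      rw [hinner, hinner] at h
      exact h
    refine ⟨lam, hsym, ?_, hx⟩
    intro i
    set β : ι → ℤ := fun j => if ∃ k : ℕ, (σ ^ k) i = j then 1 else 0 with hβdef
    have hβsym : ∀ j, β (σ j) = β j := by
      intro j
      simp only [hβdef]
      exact if_congr (my_orbit_succ σ i j) rfl rfl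
    have hval : ⟪x, ∑ j, (β j : ℝ) • f j⟫
        = (Nat.card {j : ι | ∃ k : ℕ, (σ ^ k) i = j} : ℝ) * lam i := by
      rw [inner_sum]
      have hterm : ∀ j ∈ Finset.univ, ⟪x, (β j : ℝ) • f j⟫
          = if (∃ k : ℕ, (σ ^ k) i = j) then lam j else 0 := by
        intro j _
        rw [real_inner_smul_right, hinner]
        simp only [hβdef]
        split <;> simp
      rw [Finset.sum_congr rfl hterm, ← Finset.sum_filter]
      have hconst : ∀ j ∈ Finset.univ.filter (fun j => ∃ k : ℕ, (σ ^ k) i = j),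
          lam j = lam i := by
        intro j hj
        rw [Finset.mem_filter] at hj
        obtain ⟨k, hk⟩ := hj.2
        rw [← hk, my_invariant_pow σ lam hsym]
      rw [Finset.sum_congr rfl hconst, Finset.sum_const, nsmul_eq_mul]
      congr 2
      rw [Nat.card_eq_fintype_card, Fintype.card_subtype]
      simp only [Set.mem_setOf_eq]
    obtain ⟨n, hn⟩ := hint β hβsym
    exact ⟨n, hval.symm.trans hn⟩
  · rintro ⟨lam, hsym, hm, rfl⟩
    constructor
    · have h1 : ω (∑ i, lam i • e i) = ∑ i, lam i • e (σ i) := by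
        rw [map_sum]
        exact Finset.sum_congr rfl fun i _ => by rw [map_smul, hω]
      rw [h1]
      calc ∑ i, lam i • e (σ i) = ∑ i, lam (σ i) • e (σ i) :=
            Finset.sum_congr rfl fun i _ => by rw [hsym]
        _ = ∑ i, lam i • e i := Equiv.sum_comp σ (fun j => lam j • e j)
    · intro β hβ
      have hv : ⟪∑ i, lam i • e i, ∑ j, (β j : ℝ) • f j⟫ = ∑ j, (β j : ℝ) * lam j := by
        rw [inner_sum]
        exact Finset.sum_congr rfl fun j _ => by rw [real_inner_smul_right, hcoord]
      rw [hv]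
      exact my_sum_invariant_int σ β lam hβ hsym hm
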